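/- Let u be a uniformly recurrent infinite word and w a weak bispecial factor of u such that there is a unique letter a ∈ E_ℓ(w) with the property that more than one return word of w starts with a letter in E_r(aw). Then #R(aw) < #R(w). -/

import Mathlib

variable {A : Type*}

/-- The factor of `u` of length `n` starting at position `j`. -/
def factorAt (u : ℕ → A) (j n : ℕ) : List A :=
  (List.range n).map (fun i => u (j + i))

/-- `j` is an occurrence of the finite word `w` in `u`. -/
def OccursAt (u : ℕ → A) (w : List A) (j : ℕ) : Prop :=
  factorAt u j w.length = w

/-- `w` is a factor of the infinite word `u`. -/
def IsFactor (u : ℕ → A) (w : List A) : Prop :=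
  ∃ j, OccursAt u w j

/-- `v` is a return word of `w` in `u`: the word between two successive occurrences of `w`. -/
def IsReturnWord (u : ℕ → A) (w v : List A) : Prop :=
  ∃ j k, j < k ∧ OccursAt u w j ∧ OccursAt u w k ∧
    (∀ l, j < l → l < k → ¬ OccursAt u w l) ∧ v = factorAt u j (k - j)

/-- The set `R(w)` of return words of `w` in `u`. -/
def returnWords (u : ℕ → A) (w : List A) : Set (List A) :=
  {v | IsReturnWord u w v}

/-- Property `R_m`: every factor of `u` has exactly `m` return words. -/
def PropertyR (u : ℕ → A) (m : ℕ) : Prop :=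
  ∀ w, IsFactor u w → (returnWords u w).Finite ∧ (returnWords u w).ncard = m

/-- The set of left extensions of `w`. -/
def leftExt (u : ℕ → A) (w : List A) : Set A := {a | IsFactor u (a :: w)}

/-- The set of right extensions of `w`. -/
def rightExt (u : ℕ → A) (w : List A) : Set A := {b | IsFactor u (w ++ [b])}

def LeftSpecial (u : ℕ → A) (w : List A) : Prop := 2 ≤ (leftExt u w).ncard

def RightSpecial (u : ℕ → A) (w : List A) : Prop := 2 ≤ (rightExt u w).ncard

/-- The set of pairs `(a, b)` such that `a w b` is a factor of `u`. -/
def extPairs (u : ℕ → A) (w : List A) : Set (A × A) :=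
  {p | IsFactor u (p.1 :: (w ++ [p.2]))}

/-- The bilateral order `B(w)`. -/
noncomputable def bilateralOrder (u : ℕ → A) (w : List A) : ℤ :=
  ((extPairs u w).ncard : ℤ) - (leftExt u w).ncard - (rightExt u w).ncard + 1

/-- `w` is a weak bispecial factor of `u`. -/
def WeakBispecial (u : ℕ → A) (w : List A) : Prop :=
  IsFactor u w ∧ bilateralOrder u w < 0

/-- The factor complexity of `u`. -/
noncomputable def Complexity (u : ℕ → A) (n : ℕ) : ℕ :=
  {w : List A | w.length = n ∧ IsFactor u w}.ncard

/-- `u` is recurrent: every factor occurs at least twice. -/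
def Recurrent (u : ℕ → A) : Prop :=
  ∀ w, IsFactor u w → ∃ j k, j < k ∧ OccursAt u w j ∧ OccursAt u w k

/-- `u` is uniformly recurrent. -/
def UniformlyRecurrent (u : ℕ → A) : Prop :=
  ∀ n : ℕ, ∃ N : ℕ, ∀ w, IsFactor u w → w.length = N →
    ∀ v, IsFactor u v → v.length = n → v <:+: w

def EventuallyPeriodic (u : ℕ → A) : Prop :=
  ∃ p, 0 < p ∧ ∃ N, ∀ n, N ≤ n → u (n + p) = u n

/-- `w` is a maximal right special factor. -/
def MaximalRightSpecial (u : ℕ → A) (w : List A) : Prop :=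
  IsFactor u w ∧ RightSpecial u w ∧
    ∀ v, IsFactor u v → RightSpecial u v → w <:+ v → v = w

/-- The return word `v` of `w` starts with the letter `b`. -/
def StartsWithLetter (w v : List A) (b : A) : Prop := (w ++ [b]) <+: (v ++ w)
section Basics
variable {A : Type*} {u : ℕ → A}

lemma factorAt_length (u : ℕ → A) (j n : ℕ) : (factorAt u j n).length = n := by
  simp [factorAt]

lemma factorAt_append (u : ℕ → A) (j m n : ℕ) :
    factorAt u j (m + n) = factorAt u j m ++ factorAt u (j + m) n := by
  simp only [factorAt, List.range_add, List.map_append, List.map_map]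
  congr 1
  simp [Function.comp, Nat.add_comm, Nat.add_assoc, Nat.add_left_comm]

lemma factorAt_one (u : ℕ → A) (j : ℕ) : factorAt u j 1 = [u j] := by
  simp [factorAt, List.range_succ]

lemma factorAt_succ (u : ℕ → A) (j n : ℕ) :
    factorAt u j (n + 1) = factorAt u j n ++ [u (j + n)] := by
  rw [factorAt_append, factorAt_one]

lemma factorAt_cons (u : ℕ → A) (j n : ℕ) :
    factorAt u j (n + 1) = u j :: factorAt u (j + 1) n := by
  rw [Nat.add_comm n 1, factorAt_append, factorAt_one]; rfl

lemma occursAt_factorAt (u : ℕ → A) (j n : ℕ) : OccursAt u (factorAt u j n) j := by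
  unfold OccursAt; rw [factorAt_length]

lemma occursAt_append {x y : List A} {j : ℕ} :
    OccursAt u (x ++ y) j ↔ OccursAt u x j ∧ OccursAt u y (j + x.length) := by
  unfold OccursAt
  rw [List.length_append, factorAt_append]
  constructor
  · intro h
    exact List.append_inj h (factorAt_length u j x.length)
  · rintro ⟨h1, h2⟩; rw [h1, h2]

lemma occursAt_singleton {b : A} {j : ℕ} : OccursAt u [b] j ↔ u j = b := by
  unfold OccursAt
  simp [factorAt_one]

lemma occursAt_cons {x : A} {z : List A} {j : ℕ} :
    OccursAt u (x :: z) j ↔ u j = x ∧ OccursAt u z (j + 1) := by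
  have : x :: z = [x] ++ z := rfl
  rw [this, occursAt_append, occursAt_singleton]
  rfl

lemma factorAt_prefix (u : ℕ → A) (j : ℕ) {m n : ℕ} (h : m ≤ n) :
    factorAt u j m <+: factorAt u j n := by
  refine ⟨factorAt u (j + m) (n - m), ?_⟩
  rw [← factorAt_append, Nat.add_sub_cancel' h]

end Basics
section Occ
variable {A : Type*} {u : ℕ → A}

/-- Occurrences of a factor are syndetic. -/
lemma exists_occ_ge (hur : UniformlyRecurrent u) {w : List A} (hw : IsFactor u w) :
    ∃ N, ∀ p, ∃ l, p ≤ l ∧ l ≤ p + N ∧ OccursAt u w l := by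
  obtain ⟨N, hN⟩ := hur w.length
  refine ⟨N, fun p => ?_⟩
  have hfac : IsFactor u (factorAt u p N) := ⟨p, occursAt_factorAt u p N⟩
  obtain ⟨s, t, hst⟩ := hN _ hfac (factorAt_length u p N) w hw rfl
  have hocc : OccursAt u (s ++ (w ++ t)) p := by
    have hlen : (s ++ (w ++ t)).length = N := by
      rw [← List.append_assoc, hst, factorAt_length]
    unfold OccursAt
    rw [hlen, ← hst, ← List.append_assoc]
  have h2 := (occursAt_append.mp hocc).2
  have h3 := (occursAt_append.mp h2).1
  refine ⟨p + s.length, Nat.le_add_right _ _, ?_, h3⟩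
  have : s.length ≤ N := by
    have := congrArg List.length hst
    simp [factorAt_length] at this
    omega
  omega

/-- Next occurrence strictly after `j` exists. -/
lemma exists_next_occ (hur : UniformlyRecurrent u) {w : List A} (hw : IsFactor u w) (j : ℕ) :
    ∃ k, j < k ∧ OccursAt u w k ∧ ∀ l, j < l → l < k → ¬ OccursAt u w l := by
  classical
  obtain ⟨N, hN⟩ := exists_occ_ge hur hw
  obtain ⟨l, hl1, _, hl3⟩ := hN (j + 1)
  have hex : ∃ k, j < k ∧ OccursAt u w k := ⟨l, by omega, hl3⟩
  refine ⟨Nat.find hex, (Nat.find_spec hex).1, (Nat.find_spec hex).2, fun m hm1 hm2 hm3 => ?_⟩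
  exact Nat.find_min hex hm2 ⟨hm1, hm3⟩

/-- First occurrence at or after `p` exists. -/
lemma exists_first_from (hur : UniformlyRecurrent u) {w : List A} (hw : IsFactor u w) (p : ℕ) :
    ∃ k, p ≤ k ∧ OccursAt u w k ∧ ∀ l, p ≤ l → l < k → ¬ OccursAt u w l := by
  classical
  obtain ⟨N, hN⟩ := exists_occ_ge hur hw
  obtain ⟨l, hl1, _, hl3⟩ := hN p
  have hex : ∃ k, p ≤ k ∧ OccursAt u w k := ⟨l, hl1, hl3⟩
  refine ⟨Nat.find hex, (Nat.find_spec hex).1, (Nat.find_spec hex).2, fun m hm1 hm2 hm3 => ?_⟩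
  exact Nat.find_min hex hm2 ⟨hm1, hm3⟩

lemma next_occ_unique {w : List A} {j k k' : ℕ}
    (h : j < k ∧ OccursAt u w k ∧ ∀ l, j < l → l < k → ¬ OccursAt u w l)
    (h' : j < k' ∧ OccursAt u w k' ∧ ∀ l, j < l → l < k' → ¬ OccursAt u w l) : k = k' := by
  rcases lt_trichotomy k k' with hlt | heq | hgt
  · exact absurd h.2.1 (h'.2.2 k h.1 hlt)
  · exact heq
  · exact absurd h'.2.1 (h.2.2 k' h'.1 hgt)

lemma first_from_unique {w : List A} {p k k' : ℕ}
    (h : p ≤ k ∧ OccursAt u w k ∧ ∀ l, p ≤ l → l < k → ¬ OccursAt u w l)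
    (h' : p ≤ k' ∧ OccursAt u w k' ∧ ∀ l, p ≤ l → l < k' → ¬ OccursAt u w l) : k = k' := by
  rcases lt_trichotomy k k' with hlt | heq | hgt
  · exact absurd h.2.1 (h'.2.2 k h.1 hlt)
  · exact heq
  · exact absurd h'.2.1 (h.2.2 k' h'.1 hgt)

/-- Return words are bounded in length, hence finitely many. -/
lemma returnWords_finite [Finite A] (hur : UniformlyRecurrent u) {w : List A}
    (hw : IsFactor u w) : (returnWords u w).Finite := by
  obtain ⟨N, hN⟩ := exists_occ_ge hur hw
  apply Set.Finite.subset (List.finite_length_le A (N + 1))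
  rintro v ⟨j, k, hjk, _, hk, hbet, hv⟩
  obtain ⟨l, hl1, hl2, hl3⟩ := hN (j + 1)
  have hkl : k ≤ l := by
    by_contra hc
    exact hbet l (by omega) (by omega) hl3
  simp only [Set.mem_setOf_eq, hv, factorAt_length]
  omega

end Occ
section Start
variable {A : Type*} {u : ℕ → A}

/-- The return word from occurrence `j` to `k` starts with the letter `u (j + w.length)`. -/
lemma starts_of_config {w : List A} {j k : ℕ} (hjk : j < k)
    (hj : OccursAt u w j) (hk : OccursAt u w k) :
    StartsWithLetter w (factorAt u j (k - j)) (u (j + w.length)) := by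
  have hjk' : j + (k - j) = k := by omega
  have h1 : factorAt u j (k - j) ++ w = factorAt u j (k - j + w.length) := by
    rw [factorAt_append, hjk', hk]
  have h2 : w ++ [u (j + w.length)] = factorAt u j (w.length + 1) := by
    rw [factorAt_succ, hj]
  unfold StartsWithLetter
  rw [h1, h2]
  exact factorAt_prefix u j (by omega)

lemma startsWithLetter_unique {w v : List A} {b b' : A}
    (h : StartsWithLetter w v b) (h' : StartsWithLetter w v b') : b = b' := by
  unfold StartsWithLetter at h h'
  have := List.prefix_or_prefix_of_prefix h h'
  have heq : w ++ [b] = w ++ [b'] := by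
    rcases this with h1 | h1
    · exact h1.eq_of_length (by simp)
    · exact (h1.eq_of_length (by simp)).symm
  simpa using heq

/-- Every right extension letter starts some return word. -/
lemma exists_return_starting (hur : UniformlyRecurrent u) {w : List A} {b : A}
    (hb : b ∈ rightExt u w) :
    ∃ v ∈ returnWords u w, StartsWithLetter w v b := by
  obtain ⟨j, hj⟩ := hb
  have hwj : OccursAt u w j := (occursAt_append.mp hj).1
  have hbj : u (j + w.length) = b := occursAt_singleton.mp (occursAt_append.mp hj).2
  obtain ⟨k, hk1, hk2, hk3⟩ := exists_next_occ hur ⟨j, hwj⟩ j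
  refine ⟨factorAt u j (k - j), ⟨j, k, hk1, hwj, hk2, hk3, rfl⟩, ?_⟩
  rw [← hbj]
  exact starts_of_config hk1 hwj hk2

lemma rightExt_cons_subset (a : A) (w : List A) :
    rightExt u (a :: w) ⊆ rightExt u w := by
  intro b hb
  obtain ⟨j, hj⟩ := hb
  have h2 : OccursAt u (a :: (w ++ [b])) j := hj
  exact ⟨j + 1, (occursAt_cons.mp h2).2⟩

/-- Any factor extends to the right. -/
lemma rightExt_nonempty {w : List A} (hw : IsFactor u w) : (rightExt u w).Nonempty := by
  obtain ⟨j, hj⟩ := hw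
  refine ⟨u (j + w.length), j, ?_⟩
  rw [occursAt_append, occursAt_singleton]
  exact ⟨hj, rfl⟩

/-- Key counting: for a weak bispecial `w`, no left extension `a` can have
`E_r(aw) = E_r(w)`. -/
lemma rightExt_cons_ssubset [Fintype A] {w : List A} (hwb : WeakBispecial u w)
    {a : A} (ha : a ∈ leftExt u w) : rightExt u (a :: w) ⊂ rightExt u w := by
  classical
  refine ⟨rightExt_cons_subset a w, fun hsub => ?_⟩
  have hEq : rightExt u (a :: w) = rightExt u w :=
    le_antisymm (rightExt_cons_subset a w) hsub
  -- choose a right extension letter for each left extension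
  set f : A → A := fun a' => if h : IsFactor u (a' :: w) then u (h.choose + (w.length + 1)) else a
    with hf
  have hfmem : ∀ a' ∈ leftExt u w, (a', f a') ∈ extPairs u w := by
    intro a' ha'
    have h : IsFactor u (a' :: w) := ha'
    have hj : OccursAt u (a' :: w) h.choose := h.choose_spec
    have : OccursAt u ((a' :: w) ++ [u (h.choose + (w.length + 1))]) h.choose := by
      rw [occursAt_append, occursAt_singleton]
      exact ⟨hj, by simp⟩
    have hmem : IsFactor u (a' :: (w ++ [f a'])) := by
      simp only [hf, dif_pos h]
      exact ⟨h.choose, this⟩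
    exact hmem
  set S₁ : Set (A × A) := (fun a' => (a', f a')) '' (leftExt u w \ {a}) with hS₁
  set S₂ : Set (A × A) := (fun b => (a, b)) '' rightExt u w with hS₂
  have hS₁sub : S₁ ⊆ extPairs u w := by
    rintro p ⟨a', ⟨ha', _⟩, rfl⟩
    exact hfmem a' ha'
  have hS₂sub : S₂ ⊆ extPairs u w := by
    rintro p ⟨b, hb, rfl⟩
    rw [← hEq] at hb
    exact hb
  have hdisj : Disjoint S₁ S₂ := by
    rw [Set.disjoint_left]
    rintro p ⟨a', ⟨_, ha'ne⟩, rfl⟩ ⟨b, _, hb⟩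
    apply ha'ne
    have : a' = a := (Prod.mk.injEq _ _ _ _ ▸ hb.symm).1
    simp [this]
  have hcard1 : S₁.ncard = (leftExt u w).ncard - 1 := by
    rw [hS₁, Set.ncard_image_of_injOn (fun x _ y _ hxy => (Prod.mk.injEq _ _ _ _ ▸ hxy).1),
      Set.ncard_diff_singleton_of_mem ha]
  have hcard2 : S₂.ncard = (rightExt u w).ncard := by
    rw [hS₂, Set.ncard_image_of_injOn (fun x _ y _ hxy => (Prod.mk.injEq _ _ _ _ ▸ hxy).2)]
  have hunion : (S₁ ∪ S₂).ncard = S₁.ncard + S₂.ncard :=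
    Set.ncard_union_eq hdisj (Set.toFinite _) (Set.toFinite _)
  have hle : (S₁ ∪ S₂).ncard ≤ (extPairs u w).ncard :=
    Set.ncard_le_ncard (Set.union_subset hS₁sub hS₂sub) (Set.toFinite _)
  have hL1 : 1 ≤ (leftExt u w).ncard := (Set.ncard_pos (Set.toFinite _)).mpr ⟨a, ha⟩
  have hB := hwb.2
  unfold bilateralOrder at hB
  have : (leftExt u w).ncard - 1 + (rightExt u w).ncard ≤ (extPairs u w).ncard := by omega
  have hcast : ((leftExt u w).ncard : ℤ) - 1 + (rightExt u w).ncard ≤ (extPairs u w).ncard := by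
    push_cast [Nat.cast_sub hL1] at this ⊢
    omega
  omega

end Start
section Key
variable {A : Type*} {u : ℕ → A}

/-- Core determinism lemma: the word from an occurrence of `w` up to (and including the
`a` of) the next occurrence of `aw` is determined by the first return word of `w`. -/
lemma key_determinism [Fintype A] (hur : UniformlyRecurrent u) {w : List A}
    (hw : IsFactor u w) {a : A}
    (huniq : ∀ a' ∈ leftExt u w, a' ≠ a →
      {v ∈ returnWords u w |
        ∃ b ∈ rightExt u (a' :: w), StartsWithLetter w v b}.ncard ≤ 1)
    (d : ℕ) :
    ∀ p p' n n' k k', k - p ≤ d →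
      OccursAt u w p → OccursAt u w p' →
      (p < n ∧ OccursAt u w n ∧ ∀ l, p < l → l < n → ¬ OccursAt u w l) →
      (p' < n' ∧ OccursAt u w n' ∧ ∀ l, p' < l → l < n' → ¬ OccursAt u w l) →
      (p ≤ k ∧ OccursAt u (a :: w) k ∧ ∀ l, p ≤ l → l < k → ¬ OccursAt u (a :: w) l) →
      (p' ≤ k' ∧ OccursAt u (a :: w) k' ∧ ∀ l, p' ≤ l → l < k' → ¬ OccursAt u (a :: w) l) →
      factorAt u p (n - p) = factorAt u p' (n' - p') →
      factorAt u p (k + 1 - p) = factorAt u p' (k' + 1 - p') := by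
  induction d using Nat.strong_induction_on with
  | _ d IH =>
  intro p p' n n' k k' hd hp hp' hn hn' hk hk' hv
  have hpn : p < n := hn.1
  have hpn' : p' < n' := hn'.1
  -- the two first return words have the same length and the same last letter
  have hlen : n - p = n' - p' := by
    have := congrArg List.length hv
    simpa [factorAt_length] using this
  have hlast : u (n - 1) = u (n' - 1) := by
    have e1 : factorAt u p (n - p) = factorAt u p (n - p - 1) ++ [u (n - 1)] := by
      have h1 : n - 1 = p + (n - p - 1) := by omega
      have h2 : n - p = (n - p - 1) + 1 := by omega
      rw [h1, ← factorAt_succ, ← h2]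
    have e2 : factorAt u p' (n' - p') = factorAt u p' (n' - p' - 1) ++ [u (n' - 1)] := by
      have h1 : n' - 1 = p' + (n' - p' - 1) := by omega
      have h2 : n' - p' = (n' - p' - 1) + 1 := by omega
      rw [h1, ← factorAt_succ, ← h2]
    have := List.append_inj' (e1 ▸ e2 ▸ hv) (by simp)
    simpa using this.2
  by_cases hA : u (n - 1) = a
  · -- Case A: the next occurrence of w is preceded by a; the run ends here.
    have hawn : OccursAt u (a :: w) (n - 1) := by
      rw [occursAt_cons]
      refine ⟨hA, ?_⟩
      have : n - 1 + 1 = n := by omega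
      rw [this]; exact hn.2.1
    have hkeq : k = n - 1 := by
      apply first_from_unique hk
      refine ⟨by omega, hawn, fun l hl1 hl2 hl3 => ?_⟩
      have := (occursAt_cons.mp hl3).2
      exact hn.2.2 (l + 1) (by omega) (by omega) this
    have hawn' : OccursAt u (a :: w) (n' - 1) := by
      rw [occursAt_cons]
      refine ⟨hlast ▸ hA, ?_⟩
      have : n' - 1 + 1 = n' := by omega
      rw [this]; exact hn'.2.1
    have hkeq' : k' = n' - 1 := by
      apply first_from_unique hk'
      refine ⟨by omega, hawn', fun l hl1 hl2 hl3 => ?_⟩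
      have := (occursAt_cons.mp hl3).2
      exact hn'.2.2 (l + 1) (by omega) (by omega) this
    have g1 : k + 1 - p = n - p := by omega
    have g2 : k' + 1 - p' = n' - p' := by omega
    rw [g1, g2]; exact hv
  · -- Case B: continue with the next return word, determined by huniq.
    have hkn : n ≤ k := by
      by_contra hc
      push_neg at hc
      have hwk1 : OccursAt u w (k + 1) := (occursAt_cons.mp hk.2.1).2
      have huk : u k = a := (occursAt_cons.mp hk.2.1).1
      have hk1n : k + 1 = n := by
        by_contra hc2
        exact hn.2.2 (k + 1) (by omega) (by omega) hwk1
      apply hA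
      rw [show n - 1 = k by omega]
      exact huk
    have hkn' : n' ≤ k' := by
      by_contra hc
      push_neg at hc
      have hwk1 : OccursAt u w (k' + 1) := (occursAt_cons.mp hk'.2.1).2
      have huk : u k' = a := (occursAt_cons.mp hk'.2.1).1
      have hk1n : k' + 1 = n' := by
        by_contra hc2
        exact hn'.2.2 (k' + 1) (by omega) (by omega) hwk1
      apply hA
      rw [hlast, show n' - 1 = k' by omega]
      exact huk
    obtain ⟨m, hm1, hm2, hm3⟩ := exists_next_occ hur hw n
    obtain ⟨m', hm1', hm2', hm3'⟩ := exists_next_occ hur hw n'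
    -- a₂w is a factor (occurring at n-1 and n'-1)
    have hawocc : OccursAt u (u (n - 1) :: w) (n - 1) := by
      rw [occursAt_cons]
      refine ⟨rfl, ?_⟩
      have : n - 1 + 1 = n := by omega
      rw [this]; exact hn.2.1
    have hawocc' : OccursAt u (u (n - 1) :: w) (n' - 1) := by
      rw [occursAt_cons]
      refine ⟨hlast.symm, ?_⟩
      have : n' - 1 + 1 = n' := by omega
      rw [this]; exact hn'.2.1
    have ha₂mem : u (n - 1) ∈ leftExt u w := ⟨n - 1, hawocc⟩
    -- the next return words start with letters in rightExt (u (n - 1) :: w)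
    have hbmem : u (n + w.length) ∈ rightExt u (u (n - 1) :: w) := by
      refine ⟨n - 1, ?_⟩
      rw [occursAt_append, occursAt_singleton]
      refine ⟨hawocc, ?_⟩
      have : n - 1 + (u (n - 1) :: w).length = n + w.length := by
        simp only [List.length_cons]; omega
      rw [this]
    have hbmem' : u (n' + w.length) ∈ rightExt u (u (n - 1) :: w) := by
      refine ⟨n' - 1, ?_⟩
      rw [occursAt_append, occursAt_singleton]
      refine ⟨hawocc', ?_⟩
      have : n' - 1 + (u (n - 1) :: w).length = n' + w.length := by
        simp only [List.length_cons]; omega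
      rw [this]
    -- both next return words lie in the ≤1-element set, hence are equal
    set S := {v ∈ returnWords u w |
        ∃ b ∈ rightExt u (u (n - 1) :: w), StartsWithLetter w v b} with hS
    have hScard : S.ncard ≤ 1 := huniq (u (n - 1)) ha₂mem hA
    have hSfin : S.Finite := (returnWords_finite hur hw).subset (Set.sep_subset _ _)
    have hv2S : factorAt u n (m - n) ∈ S :=
      ⟨⟨n, m, hm1, hn.2.1, hm2, hm3, rfl⟩,
        u (n + w.length), hbmem, starts_of_config hm1 hn.2.1 hm2⟩
    have hv2S' : factorAt u n' (m' - n') ∈ S :=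
      ⟨⟨n', m', hm1', hn'.2.1, hm2', hm3', rfl⟩,
        u (n' + w.length), hbmem', starts_of_config hm1' hn'.2.1 hm2'⟩
    have hv2eq : factorAt u n (m - n) = factorAt u n' (m' - n') := by
      rcases (Set.ncard_le_one_iff_eq hSfin).mp hScard with h | ⟨x, hx⟩
      · rw [h] at hv2S; exact absurd hv2S (Set.notMem_empty _)
      · rw [hx] at hv2S hv2S'
        rw [Set.mem_singleton_iff.mp hv2S, Set.mem_singleton_iff.mp hv2S']
    -- apply the induction hypothesis at (n, n')
    have htail := IH (k - n) (by omega) n n' m m' k k' le_rfl hn.2.1 hn'.2.1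
      ⟨hm1, hm2, hm3⟩ ⟨hm1', hm2', hm3'⟩
      ⟨hkn, hk.2.1, fun l hl1 hl2 => hk.2.2 l (by omega) hl2⟩
      ⟨hkn', hk'.2.1, fun l hl1 hl2 => hk'.2.2 l (by omega) hl2⟩
      hv2eq
    -- combine
    have hcomb : factorAt u p (k + 1 - p) =
        factorAt u p (n - p) ++ factorAt u n (k + 1 - n) := by
      have h1 : k + 1 - p = (n - p) + (k + 1 - n) := by omega
      have h2 : p + (n - p) = n := by omega
      rw [h1, factorAt_append, h2]
    have hcomb' : factorAt u p' (k' + 1 - p') =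
        factorAt u p' (n' - p') ++ factorAt u n' (k' + 1 - n') := by
      have h1 : k' + 1 - p' = (n' - p') + (k' + 1 - n') := by omega
      have h2 : p' + (n' - p') = n' := by omega
      rw [h1, factorAt_append, h2]
    rw [hcomb, hcomb', hv, htail]

end Key
section Main
variable {A : Type*} {u : ℕ → A}

lemma ret_reconstruct {a : A} {w : List A} {j k : ℕ} (hjk : j < k)
    (hj : OccursAt u (a :: w) j) :
    factorAt u j (k - j) = a :: (factorAt u (j + 1) (k + 1 - (j + 1))).dropLast := by
  have hc : k + 1 - (j + 1) = (k - j - 1) + 1 := by omega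
  rw [hc, factorAt_succ, List.dropLast_concat]
  have hd : k - j = (k - j - 1) + 1 := by omega
  conv_lhs => rw [hd, factorAt_cons]
  rw [(occursAt_cons.mp hj).1]

theorem card_returnWords_lt_of_weakBispecial' [Fintype A] (u : ℕ → A)
    (hur : UniformlyRecurrent u) (w : List A) (hwb : WeakBispecial u w)
    (a : A) (ha : a ∈ leftExt u w)
    (hmany : 1 < {v ∈ returnWords u w |
      ∃ b ∈ rightExt u (a :: w), StartsWithLetter w v b}.ncard)
    (huniq : ∀ a' ∈ leftExt u w, a' ≠ a →
      {v ∈ returnWords u w |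
        ∃ b ∈ rightExt u (a' :: w), StartsWithLetter w v b}.ncard ≤ 1) :
    (returnWords u (a :: w)).ncard < (returnWords u w).ncard := by
  classical
  have hwf : IsFactor u w := hwb.1
  have hRWfin : (returnWords u w).Finite := returnWords_finite hur hwf
  set T := {v ∈ returnWords u w | ∃ b ∈ rightExt u (a :: w), StartsWithLetter w v b} with hT
  have hTfin : T.Finite := hRWfin.subset (Set.sep_subset _ _)
  -- the "first return word" map
  set Φ : List A → List A := fun r =>
    if h : IsReturnWord u (a :: w) r then
      factorAt u (h.choose + 1)
        ((exists_next_occ hur hwf (h.choose + 1)).choose - (h.choose + 1))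
    else r with hΦ
  have hΦspec : ∀ r, IsReturnWord u (a :: w) r → ∃ p n k,
      OccursAt u w p ∧
      (p < n ∧ OccursAt u w n ∧ ∀ l, p < l → l < n → ¬ OccursAt u w l) ∧
      (p ≤ k ∧ OccursAt u (a :: w) k ∧ ∀ l, p ≤ l → l < k → ¬ OccursAt u (a :: w) l) ∧
      Φ r = factorAt u p (n - p) ∧ Φ r ∈ T ∧
      r = a :: (factorAt u p (k + 1 - p)).dropLast := by
    intro r h
    obtain ⟨k, hjk, hj, hk, hbet, hr⟩ := h.choose_spec
    set j := h.choose with hjdef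
    obtain ⟨hn1, hn2, hn3⟩ := (exists_next_occ hur hwf (j + 1)).choose_spec
    set n := (exists_next_occ hur hwf (j + 1)).choose with hndef
    have hΦr : Φ r = factorAt u (j + 1) (n - (j + 1)) := by
      rw [hΦ]; simp only [dif_pos h]; rfl
    have hwp : OccursAt u w (j + 1) := (occursAt_cons.mp hj).2
    refine ⟨j + 1, n, k, hwp, ⟨hn1, hn2, hn3⟩,
      ⟨by omega, hk, fun l hl1 hl2 => hbet l (by omega) hl2⟩, hΦr, ?_, ?_⟩
    · -- Φ r ∈ T
      have hb : u (j + 1 + w.length) ∈ rightExt u (a :: w) := by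
        refine ⟨j, ?_⟩
        rw [occursAt_append, occursAt_singleton]
        refine ⟨hj, ?_⟩
        have : j + (a :: w).length = j + 1 + w.length := by
          simp only [List.length_cons]; omega
        rw [this]
      rw [hΦr, hT]
      exact ⟨⟨j + 1, n, hn1, hwp, hn2, hn3, rfl⟩,
        u (j + 1 + w.length), hb, starts_of_config hn1 hwp hn2⟩
    · rw [hr]
      exact ret_reconstruct hjk hj
  have hmaps : ∀ r ∈ returnWords u (a :: w), Φ r ∈ T := by
    intro r hr
    obtain ⟨p, n, k, _, _, _, _, hmem, _⟩ := hΦspec r hr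
    exact hmem
  have hinj : Set.InjOn Φ (returnWords u (a :: w)) := by
    intro r hr r' hr' heq
    obtain ⟨p, n, k, hp, hn, hk, hΦr, _, hrec⟩ := hΦspec r hr
    obtain ⟨p', n', k', hp', hn', hk', hΦr', _, hrec'⟩ := hΦspec r' hr'
    have hv : factorAt u p (n - p) = factorAt u p' (n' - p') := by
      rw [← hΦr, ← hΦr', heq]
    have := key_determinism hur hwf huniq (k - p) p p' n n' k k' le_rfl
      hp hp' hn hn' hk hk' hv
    rw [hrec, hrec', this]
  have h1 : (returnWords u (a :: w)).ncard ≤ T.ncard :=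
    Set.ncard_le_ncard_of_injOn Φ hmaps hinj hTfin
  have hTsub : T ⊆ returnWords u w := Set.sep_subset _ _
  obtain ⟨b₀, hb₀w, hb₀aw⟩ := Set.exists_of_ssubset (rightExt_cons_ssubset hwb ha)
  obtain ⟨v₀, hv₀R, hv₀s⟩ := exists_return_starting hur hb₀w
  have hv₀T : v₀ ∉ T := by
    rintro ⟨_, b, hbmem, hbs⟩
    exact hb₀aw (startsWithLetter_unique hbs hv₀s ▸ hbmem)
  have hssub : T ⊂ returnWords u w := ⟨hTsub, fun hcon => hv₀T (hcon hv₀R)⟩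
  exact lt_of_le_of_lt h1 (Set.ncard_lt_ncard hssub hRWfin)

end Main

/-- Let `w` be a weak bispecial factor of a uniformly recurrent word `u`
with a unique `a ∈ Eℓ(w)` such that more than one return word of `w` starts with a
letter in `E_r(aw)`. Then `#R(aw) < #R(w)`. -/
theorem card_returnWords_lt_of_weakBispecial [Fintype A] (u : ℕ → A)
    (hur : UniformlyRecurrent u) (w : List A) (hwb : WeakBispecial u w)
    (a : A) (ha : a ∈ leftExt u w)
    (hmany : 1 < {v ∈ returnWords u w |
      ∃ b ∈ rightExt u (a :: w), StartsWithLetter w v b}.ncard)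
    (huniq : ∀ a' ∈ leftExt u w, a' ≠ a →
      {v ∈ returnWords u w |
        ∃ b ∈ rightExt u (a' :: w), StartsWithLetter w v b}.ncard ≤ 1) :
    (returnWords u (a :: w)).ncard < (returnWords u w).ncard := by
  exact card_returnWords_lt_of_weakBispecial' u hur w hwb a ha hmany huniq
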